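/- For an Ornstein-Uhlenbeck operator P = (1/2)Tr(Q∇²_x) + ⟨Bx, ∇_x⟩, the quadratic symbol q(x,ξ) = (1/2)⟨Qξ,ξ⟩ − i⟨Bx,ξ⟩ of −P − (1/2)Tr(B) has nonnegative real part, and if the Kalman rank condition Rank[Q^{1/2}, BQ^{1/2}, ..., B^{n-1}Q^{1/2}] = n holds, then the singular space of q equals S = ℝⁿ_x × {0} ⊂ ℝⁿ_x × ℝⁿ_ξ. -/

import Mathlib

open Matrix

/-- The Kalman matrix `[R, BR, ..., B^k R]`. -/
noncomputable def kalmanMatrix {n : ℕ} (R B : Matrix (Fin n) (Fin n) ℝ) (k : ℕ) :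
    Matrix (Fin n) (Fin (k + 1) × Fin n) ℝ :=
  fun i p => (B ^ (p.1 : ℕ) * R) i p.2

/-- The Weyl symbol `q(x,ξ) = (1/2)⟨Qξ,ξ⟩ − i⟨Bx,ξ⟩` of `−P − (1/2)Tr B`, where
`P = (1/2)Tr(Q∇²_x) + ⟨Bx,∇_x⟩` is the Ornstein-Uhlenbeck operator. -/
noncomputable def ouSymbol {n : ℕ} (Q B : Matrix (Fin n) (Fin n) ℝ)
    (x ξ : Fin n → ℝ) : ℂ :=
  ((1 / 2 : ℝ) * (ξ ⬝ᵥ Q.mulVec ξ) : ℝ) - Complex.I * ((B.mulVec x ⬝ᵥ ξ : ℝ) : ℂ)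

/-- `Re q` evaluated along the flow `e^{tH_{Im q}}` of the Hamilton vector field of
`Im q(x,ξ) = −⟨Bx,ξ⟩`, whose flow is `(x,ξ) ↦ (e^{−tB}x, e^{tBᵀ}ξ)`; since
`Re q(x,ξ) = (1/2)⟨Qξ,ξ⟩`, this is `(1/2)⟨Q e^{tBᵀ}ξ, e^{tBᵀ}ξ⟩`. -/
noncomputable def ouReAlongFlow {n : ℕ} (Q B : Matrix (Fin n) (Fin n) ℝ)
    (p : (Fin n → ℝ) × (Fin n → ℝ)) (t : ℝ) : ℝ :=
  (1 / 2) * (((NormedSpace.exp (t • Bᵀ)).mulVec p.2) ⬝ᵥ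
    Q.mulVec ((NormedSpace.exp (t • Bᵀ)).mulVec p.2))

section Stmt16Aux

variable {n : ℕ}

private lemma matExpZero : NormedSpace.exp (0 : Matrix (Fin n) (Fin n) ℝ) = 1 := by
  letI : SeminormedRing (Matrix (Fin n) (Fin n) ℝ) := Matrix.linftyOpSemiNormedRing
  letI : NormedRing (Matrix (Fin n) (Fin n) ℝ) := Matrix.linftyOpNormedRing
  letI : NormedAlgebra ℝ (Matrix (Fin n) (Fin n) ℝ) := Matrix.linftyOpNormedAlgebra
  exact NormedSpace.exp_zero

private lemma entryDeriv (B : Matrix (Fin n) (Fin n) ℝ) (k : ℕ) (i j : Fin n) (t : ℝ) :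
    HasDerivAt (fun t : ℝ => (NormedSpace.exp (t • B) * B ^ k) i j)
      ((NormedSpace.exp (t • B) * B ^ (k + 1)) i j) t := by
  letI : SeminormedRing (Matrix (Fin n) (Fin n) ℝ) := Matrix.linftyOpSemiNormedRing
  letI : NormedRing (Matrix (Fin n) (Fin n) ℝ) := Matrix.linftyOpNormedRing
  letI : NormedAlgebra ℝ (Matrix (Fin n) (Fin n) ℝ) := Matrix.linftyOpNormedAlgebra
  have H : HasDerivAt (fun u : ℝ => NormedSpace.exp (u • B) * B ^ k)
      (NormedSpace.exp (t • B) * B ^ (k + 1)) t := by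
    have h1 := (hasDerivAt_exp_smul_const (𝕂 := ℝ) B t).mul_const (B ^ k)
    have h2 : NormedSpace.exp (t • B) * B * B ^ k
        = NormedSpace.exp (t • B) * B ^ (k + 1) := by
      rw [mul_assoc, ← pow_succ']
    rw [← h2]
    exact h1
  let L : Matrix (Fin n) (Fin n) ℝ →ₗ[ℝ] ℝ :=
    { toFun := fun M => M i j
      map_add' := fun _ _ => rfl
      map_smul' := fun _ _ => rfl }
  exact (L.toContinuousLinearMap.hasFDerivAt).comp_hasDerivAt t H

private noncomputable def psdSqrt {Q : Matrix (Fin n) (Fin n) ℝ} (hQ : Q.PosSemidef) :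
    Matrix (Fin n) (Fin n) ℝ :=
  hQ.1.eigenvectorUnitary.1 * diagonal ((↑) ∘ (√·) ∘ hQ.1.eigenvalues) *
    (star hQ.1.eigenvectorUnitary : Matrix (Fin n) (Fin n) ℝ)

private lemma sq_symm {Q : Matrix (Fin n) (Fin n) ℝ} (hQ : Q.PosSemidef) :
    (psdSqrt hQ)ᵀ = psdSqrt hQ := by
  simp [psdSqrt, Matrix.transpose_mul, Matrix.star_eq_conjTranspose,
    Matrix.conjTranspose_eq_transpose_of_trivial, mul_assoc]

private lemma sq_mul_self {Q : Matrix (Fin n) (Fin n) ℝ} (hQ : Q.PosSemidef) :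
    psdSqrt hQ * psdSqrt hQ = Q := by
  have hU : (star hQ.1.eigenvectorUnitary : Matrix (Fin n) (Fin n) ℝ) *
      hQ.1.eigenvectorUnitary.1 = 1 := Unitary.coe_star_mul_self _
  have hD : diagonal ((↑) ∘ (√·) ∘ hQ.1.eigenvalues) *
      diagonal ((↑) ∘ (√·) ∘ hQ.1.eigenvalues) =
      diagonal (RCLike.ofReal ∘ hQ.1.eigenvalues : Fin n → ℝ) := by
    rw [diagonal_mul_diagonal]
    congr 1
    funext i
    simp [Real.mul_self_sqrt (hQ.eigenvalues_nonneg i)]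
  conv_rhs => rw [hQ.1.spectral_theorem, Unitary.conjStarAlgAut_apply]
  rw [← hD]
  simp only [psdSqrt, mul_assoc]
  congr 1
  rw [← mul_assoc (star _ : Matrix (Fin n) (Fin n) ℝ), hU, one_mul]

/-- `e^{tBᵀ} (Bᵀ)^k ξ`. -/
private noncomputable def gg (B : Matrix (Fin n) (Fin n) ℝ) (ξ : Fin n → ℝ) (k : ℕ) (t : ℝ) :
    Fin n → ℝ :=
  (NormedSpace.exp (t • Bᵀ) * Bᵀ ^ k).mulVec ξ

private noncomputable def DD (Q B : Matrix (Fin n) (Fin n) ℝ) (ξ : Fin n → ℝ) (i j : ℕ)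
    (t : ℝ) : ℝ :=
  gg B ξ i t ⬝ᵥ Q.mulVec (gg B ξ j t)

private lemma ggDeriv (B : Matrix (Fin n) (Fin n) ℝ) (ξ : Fin n → ℝ) (k : ℕ) (a : Fin n)
    (t : ℝ) : HasDerivAt (fun t => gg B ξ k t a) (gg B ξ (k + 1) t a) t := by
  simp only [gg, Matrix.mulVec, dotProduct]
  exact HasDerivAt.fun_sum fun c _ => (entryDeriv Bᵀ k a c t).mul_const (ξ c)

private lemma DDDeriv (Q B : Matrix (Fin n) (Fin n) ℝ) (ξ : Fin n → ℝ) (i j : ℕ) (t : ℝ) :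
    HasDerivAt (DD Q B ξ i j) (DD Q B ξ (i + 1) j t + DD Q B ξ i (j + 1) t) t := by
  have key : ∀ a : Fin n,
      HasDerivAt (fun t => gg B ξ i t a * (Q.mulVec (gg B ξ j t)) a)
        (gg B ξ (i + 1) t a * (Q.mulVec (gg B ξ j t)) a
          + gg B ξ i t a * (Q.mulVec (gg B ξ (j + 1) t)) a) t := by
    intro a
    have h2 : HasDerivAt (fun t => (Q.mulVec (gg B ξ j t)) a)
        ((Q.mulVec (gg B ξ (j + 1) t)) a) t := by
      simp only [Matrix.mulVec, dotProduct]
      exact HasDerivAt.fun_sum fun b _ => (ggDeriv B ξ j b t).const_mul (Q a b)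
    exact (ggDeriv B ξ i a t).mul h2
  have h := HasDerivAt.fun_sum (fun a (_ : a ∈ Finset.univ) => key a)
  unfold DD
  simp only [dotProduct]
  simpa [Finset.sum_add_distrib] using h

/-- `(1/2) ∑ C(k,i) ⟨(Bᵀ)^i ξ(t), Q (Bᵀ)^{k-i} ξ(t)⟩`, the `k`-th derivative of
`ouReAlongFlow` as a function of `t`. -/
private noncomputable def FF (Q B : Matrix (Fin n) (Fin n) ℝ) (ξ : Fin n → ℝ) (k : ℕ)
    (t : ℝ) : ℝ :=
  (1 / 2) * ∑ i ∈ Finset.range (k + 1), (k.choose i : ℝ) * DD Q B ξ i (k - i) t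

private lemma sum_shift (d : ℕ → ℕ → ℝ) (k : ℕ) :
    ∑ i ∈ Finset.range (k + 1), (k.choose i : ℝ) * (d (i + 1) (k - i) + d i (k - i + 1))
      = ∑ i ∈ Finset.range (k + 1 + 1), ((k + 1).choose i : ℝ) * d i (k + 1 - i) := by
  rw [Finset.sum_range_succ' (fun i => ((k + 1).choose i : ℝ) * d i (k + 1 - i)) (k + 1)]
  simp only [mul_add, Finset.sum_add_distrib, Nat.choose_succ_succ, Nat.cast_add,
    Nat.succ_sub_succ_eq_sub, Nat.choose_zero_right, Nat.cast_one, one_mul, Nat.sub_zero,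
    add_mul]
  have e1 : ∑ i ∈ Finset.range (k + 1), (k.choose (i + 1) : ℝ) * d (i + 1) (k - i)
      = ∑ i ∈ Finset.range k, (k.choose (i + 1) : ℝ) * d (i + 1) (k - i) := by
    rw [Finset.sum_range_succ]
    simp [Nat.choose_succ_self]
  have e2 : ∑ i ∈ Finset.range (k + 1), (k.choose i : ℝ) * d i (k - i + 1)
      = (∑ i ∈ Finset.range k, (k.choose (i + 1) : ℝ) * d (i + 1) (k - i)) + d 0 (k + 1) := by
    rw [Finset.sum_range_succ' (fun i => (k.choose i : ℝ) * d i (k - i + 1)) k]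
    simp only [Nat.choose_zero_right, Nat.cast_one, one_mul, Nat.sub_zero]
    congr 1
    refine Finset.sum_congr rfl fun i hi => ?_
    have hik : i < k := Finset.mem_range.mp hi
    have : k - (i + 1) + 1 = k - i := by omega
    rw [this]
  rw [e2, e1]
  ring

private lemma FFDeriv (Q B : Matrix (Fin n) (Fin n) ℝ) (ξ : Fin n → ℝ) (k : ℕ) (t : ℝ) :
    HasDerivAt (FF Q B ξ k) (FF Q B ξ (k + 1) t) t := by
  have h : HasDerivAt
      (fun t => ∑ i ∈ Finset.range (k + 1), (k.choose i : ℝ) * DD Q B ξ i (k - i) t)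
      (∑ i ∈ Finset.range (k + 1),
        (k.choose i : ℝ) * (DD Q B ξ (i + 1) (k - i) t + DD Q B ξ i (k - i + 1) t)) t :=
    HasDerivAt.fun_sum fun i _ => (DDDeriv Q B ξ i (k - i) t).const_mul _
  rw [sum_shift (fun i j => DD Q B ξ i j t) k] at h
  exact h.const_mul (1 / 2 : ℝ)

private lemma iteratedDeriv_ouRe (Q B : Matrix (Fin n) (Fin n) ℝ)
    (p : (Fin n → ℝ) × (Fin n → ℝ)) (k : ℕ) :
    iteratedDeriv k (ouReAlongFlow Q B p) = FF Q B p.2 k := by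
  induction k with
  | zero =>
    funext t
    simp [iteratedDeriv_zero, ouReAlongFlow, FF, DD, gg]
  | succ k ih =>
    rw [iteratedDeriv_succ, ih]
    funext t
    exact (FFDeriv Q B p.2 k t).deriv

private lemma gg_zero (B : Matrix (Fin n) (Fin n) ℝ) (ξ : Fin n → ℝ) (k : ℕ) :
    gg B ξ k 0 = (Bᵀ ^ k).mulVec ξ := by
  simp [gg, matExpZero]

private lemma DD_zero {Q : Matrix (Fin n) (Fin n) ℝ} (hQ : Q.PosSemidef)
    (B : Matrix (Fin n) (Fin n) ℝ) (ξ : Fin n → ℝ) (i j : ℕ) :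
    DD Q B ξ i j 0 =
      (psdSqrt hQ).mulVec ((Bᵀ ^ i).mulVec ξ) ⬝ᵥ (psdSqrt hQ).mulVec ((Bᵀ ^ j).mulVec ξ) := by
  have hs : (psdSqrt hQ)ᵀ = (psdSqrt hQ) := sq_symm hQ
  rw [DD, gg_zero, gg_zero]
  conv_lhs => rw [← sq_mul_self hQ, ← Matrix.mulVec_mulVec]
  rw [dotProduct_mulVec]
  congr 1
  nth_rewrite 1 [← hs]
  rw [Matrix.vecMul_transpose]

private lemma key_vanish {Q : Matrix (Fin n) (Fin n) ℝ} (hQ : Q.PosSemidef)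
    (B : Matrix (Fin n) (Fin n) ℝ) (ξ : Fin n → ℝ)
    (h : ∀ k, FF Q B ξ k 0 = 0) (j : ℕ) :
    (psdSqrt hQ).mulVec ((Bᵀ ^ j).mulVec ξ) = 0 := by
  induction j using Nat.strong_induction_on with
  | _ j ih =>
    have h2 := h (2 * j)
    rw [FF] at h2
    have hz : ∀ i ∈ Finset.range (2 * j + 1), i ≠ j →
        ((2 * j).choose i : ℝ) * DD Q B ξ i (2 * j - i) 0 = 0 := by
      intro i hi hij
      rcases lt_or_gt_of_ne hij with hlt | hgt
      · rw [DD_zero hQ, ih i hlt, zero_dotProduct, mul_zero]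
      · have : 2 * j - i < j := by
          have := Finset.mem_range.mp hi; omega
        rw [DD_zero hQ, ih _ this, dotProduct_zero, mul_zero]
    rw [Finset.sum_eq_single_of_mem j (Finset.mem_range.mpr (by omega)) hz] at h2
    have hji : 2 * j - j = j := by omega
    rw [hji, DD_zero hQ] at h2
    have hc : (0 : ℝ) < ((2 * j).choose j : ℝ) := by
      exact_mod_cast Nat.choose_pos (by omega)
    have hdot : (psdSqrt hQ).mulVec ((Bᵀ ^ j).mulVec ξ) ⬝ᵥ (psdSqrt hQ).mulVec ((Bᵀ ^ j).mulVec ξ) = 0 := by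
      have hcd : ((2 * j).choose j : ℝ) * ((psdSqrt hQ).mulVec ((Bᵀ ^ j).mulVec ξ) ⬝ᵥ
          (psdSqrt hQ).mulVec ((Bᵀ ^ j).mulVec ξ)) = 0 := by linarith
      exact (mul_eq_zero.mp hcd).resolve_left hc.ne'
    exact dotProduct_self_eq_zero.mp hdot

private lemma kalman_inj {Q : Matrix (Fin n) (Fin n) ℝ} (hQ : Q.PosSemidef)
    (B : Matrix (Fin n) (Fin n) ℝ) (hK : (kalmanMatrix (psdSqrt hQ) B (n - 1)).rank = n)
    (ξ : Fin n → ℝ) (hw : ∀ a : ℕ, (psdSqrt hQ).mulVec ((Bᵀ ^ a).mulVec ξ) = 0) :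
    ξ = 0 := by
  set K := kalmanMatrix (psdSqrt hQ) B (n - 1) with hKdef
  have hs : (psdSqrt hQ)ᵀ = (psdSqrt hQ) := sq_symm hQ
  have hv : Kᵀ.mulVec ξ = 0 := by
    funext pc
    have h0 := congrFun (hw pc.1) pc.2
    simp only [Pi.zero_apply] at h0
    show Kᵀ.mulVec ξ pc = 0
    have heq : Kᵀ.mulVec ξ pc = (psdSqrt hQ).mulVec ((Bᵀ ^ (pc.1 : ℕ)).mulVec ξ) pc.2 := by
      rw [Matrix.mulVec_mulVec]
      have h3 : ((psdSqrt hQ) * Bᵀ ^ (pc.1 : ℕ)) = (B ^ (pc.1 : ℕ) * (psdSqrt hQ))ᵀ := by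
        rw [Matrix.transpose_mul, Matrix.transpose_pow, hs]
      rw [h3]
      simp [Matrix.mulVec, dotProduct, hKdef, kalmanMatrix, Matrix.transpose_apply]
    rw [heq, h0]
  have hKt : Kᵀ.rank = n := by rw [Matrix.rank_transpose]; exact hK
  have hker : LinearMap.ker Kᵀ.mulVecLin = ⊥ := by
    have hrn := LinearMap.finrank_range_add_finrank_ker Kᵀ.mulVecLin
    rw [Module.finrank_pi] at hrn
    have : Module.finrank ℝ (LinearMap.ker Kᵀ.mulVecLin) = 0 := by
      have : Matrix.rank Kᵀ = Module.finrank ℝ (LinearMap.range Kᵀ.mulVecLin) := rfl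
      simp [Fintype.card_fin] at hrn
      omega
    exact Submodule.finrank_eq_zero.mp this
  have hmem : ξ ∈ LinearMap.ker Kᵀ.mulVecLin := by
    rw [LinearMap.mem_ker, Matrix.mulVecLin_apply]
    exact hv
  rw [hker] at hmem
  simpa using hmem

end Stmt16Aux

/-- the quadratic symbol `q(x,ξ) = (1/2)⟨Qξ,ξ⟩ − i⟨Bx,ξ⟩` of
`−P − (1/2)Tr B` has nonnegative real part, and if the Kalman rank condition holds, the
singular space `S = {X ∈ ℝ²ⁿ : (H_{Im q}^k Re q)(X) = 0 ∀ k ≥ 0}`, i.e. the set of points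
where `Re q` vanishes to infinite order along the flow of `H_{Im q}`, equals
`ℝⁿ_x × {0} ⊆ ℝⁿ_x × ℝⁿ_ξ`. -/
theorem stmt16 {n : ℕ} (Q B : Matrix (Fin n) (Fin n) ℝ) (hQ : Q.PosSemidef) :
    (∀ x ξ : Fin n → ℝ, 0 ≤ (ouSymbol Q B x ξ).re) ∧
    ((kalmanMatrix (hQ.1.eigenvectorUnitary.1 *
        diagonal ((↑) ∘ (√·) ∘ hQ.1.eigenvalues) *
        (star hQ.1.eigenvectorUnitary : Matrix (Fin n) (Fin n) ℝ)) B (n - 1)).rank = n →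
      {p : (Fin n → ℝ) × (Fin n → ℝ) | ∀ k : ℕ,
          iteratedDeriv k (ouReAlongFlow Q B p) 0 = 0} =
        {p : (Fin n → ℝ) × (Fin n → ℝ) | p.2 = 0}) := by
  constructor
  · intro x ξ
    have h := hQ.dotProduct_mulVec_nonneg ξ
    rw [star_trivial] at h
    simp only [ouSymbol, Complex.sub_re, Complex.ofReal_re, Complex.mul_re, Complex.I_re,
      Complex.ofReal_im, Complex.I_im, Complex.mul_im]
    norm_num
    linarith
  · intro hK
    ext p
    simp only [Set.mem_setOf_eq]
    constructor
    · intro h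
      have hFF : ∀ k, FF Q B p.2 k 0 = 0 := by
        intro k
        rw [← iteratedDeriv_ouRe Q B p k]
        exact h k
      exact kalman_inj hQ B hK p.2 (key_vanish hQ B p.2 hFF)
    · intro h k
      rw [iteratedDeriv_ouRe Q B p k, h]
      simp [FF, DD, gg]
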